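/- Let B ∈ W^{1,∞}(ℝ³;ℝ³), E ∈ C¹(ℝ³;ℝ³) bounded with bounded derivative, and ε, h̃ > 0. Let (z,w) solve ż = εw, ẇ = w × B(εz) + εE(z) on [τ_n, τ_n + h̃], and let (z̃, w̃) solve the frozen-field system ż̃ = εw̃, ẇ̃ = w̃ × B(εz(τ_n)) + εE(z̃) with the same initial data (z(τ_n), w(τ_n)) at s = 0. Then the differences η_z(s) = z(τ_n+s) − z̃(s) and η_w(s) = w(τ_n+s) − w̃(s) satisfy |η_z(h̃)| ≤ Cε³h̃³ and |η_w(h̃)| ≤ Cε²h̃², with C independent of ε and h̃ (for h̃ bounded and solutions bounded on the interval). -/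

import Mathlib

set_option maxHeartbeats 1000000

noncomputable section
open Set
open scoped RealInnerProductSpace

/-- Euclidean norm on `ℝ³`. -/
noncomputable def norm3 (v : Fin 3 → ℝ) : ℝ := Real.sqrt (∑ i, v i ^ 2)

/-- Cross product on `ℝ³`. -/
def cross (u v : Fin 3 → ℝ) : Fin 3 → ℝ :=
  ![u 1 * v 2 - u 2 * v 1, u 2 * v 0 - u 0 * v 2, u 0 * v 1 - u 1 * v 0]

abbrev ιE : (Fin 3 → ℝ) ≃L[ℝ] EuclideanSpace ℝ (Fin 3) := (EuclideanSpace.equiv (Fin 3) ℝ).symm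

lemma norm3_eq (v : Fin 3 → ℝ) : norm3 v = ‖ιE v‖ := by
  rw [EuclideanSpace.norm_eq]
  simp [norm3, Real.norm_eq_abs, sq_abs]

lemma inner_cross_self (a b : Fin 3 → ℝ) : ⟪ιE a, ιE (cross a b)⟫ = 0 := by
  simp [PiLp.inner_apply, Fin.sum_univ_three, cross]
  ring

lemma norm3_cross_le (u v : Fin 3 → ℝ) : norm3 (cross u v) ≤ norm3 u * norm3 v := by
  unfold norm3
  rw [← Real.sqrt_mul (by positivity)]
  apply Real.sqrt_le_sqrt
  simp [cross, Fin.sum_univ_three]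
  nlinarith [sq_nonneg (u 0 * v 0 + u 1 * v 1 + u 2 * v 2)]

lemma norm3_le_three (v : Fin 3 → ℝ) : norm3 v ≤ 3 * ‖v‖ := by
  have h1 : ∀ i, |v i| ≤ ‖v‖ := fun i => by
    simpa [Real.norm_eq_abs] using norm_le_pi_norm v i
  have : norm3 v ≤ |v 0| + |v 1| + |v 2| := by
    unfold norm3
    rw [show |v 0| + |v 1| + |v 2| = Real.sqrt ((|v 0| + |v 1| + |v 2|)^2) by
      rw [Real.sqrt_sq (by positivity)]]
    apply Real.sqrt_le_sqrt
    simp [Fin.sum_univ_three]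
    nlinarith [abs_nonneg (v 0), abs_nonneg (v 1), abs_nonneg (v 2), sq_abs (v 0), sq_abs (v 1),
      sq_abs (v 2)]
  linarith [h1 0, h1 1, h1 2]

lemma pinorm_le_norm3 (v : Fin 3 → ℝ) : ‖v‖ ≤ norm3 v := by
  have h0 : 0 ≤ norm3 v := Real.sqrt_nonneg _
  rw [pi_norm_le_iff_of_nonneg h0]
  intro i
  rw [Real.norm_eq_abs, ← Real.sqrt_sq_eq_abs]
  apply Real.sqrt_le_sqrt
  exact Finset.single_le_sum (f := fun j => v j ^ 2) (fun j _ => sq_nonneg _) (Finset.mem_univ i)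

lemma hasDerivAt_iota {f : ℝ → Fin 3 → ℝ} {f' : Fin 3 → ℝ} {s : ℝ} (h : HasDerivAt f f' s) :
    HasDerivAt (fun t => ιE (f t)) (ιE f') s :=
  ((ιE.toContinuousLinearMap).hasFDerivAt).comp_hasDerivAt s h

/-- Local truncation error of freezing the magnetic field at the left endpoint:
`|η_z(ht)| ≤ C ε³ ht³` and `|η_w(ht)| ≤ C ε² ht²`, with `C` independent of `ε` and `ht`
(for `ht` bounded and solutions bounded). -/
theorem frozen_field_truncation (LB ME MD Mw hmax : ℝ)
    (hLB : 0 ≤ LB) (hME : 0 ≤ ME) (hMD : 0 ≤ MD) (hMw : 0 ≤ Mw) (hmaxpos : 0 < hmax) :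
    ∃ C > 0, ∀ (ε ht : ℝ), 0 < ε → 0 < ht → ht ≤ hmax →
      ∀ (B E : (Fin 3 → ℝ) → Fin 3 → ℝ) (z w zt wt : ℝ → Fin 3 → ℝ),
      LipschitzWith (Real.toNNReal LB) B →
      ContDiff ℝ 1 E →
      (∀ x, norm3 (E x) ≤ ME) →
      LipschitzWith (Real.toNNReal MD) E →
      (∀ s ∈ Set.Icc (0:ℝ) ht, HasDerivAt z (ε • w s) s ∧
        HasDerivAt w (cross (w s) (B (ε • z s)) + ε • E (z s)) s) →
      (∀ s ∈ Set.Icc (0:ℝ) ht, HasDerivAt zt (ε • wt s) s ∧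
        HasDerivAt wt (cross (wt s) (B (ε • z 0)) + ε • E (zt s)) s) →
      zt 0 = z 0 → wt 0 = w 0 →
      (∀ s ∈ Set.Icc (0:ℝ) ht, norm3 (w s) ≤ Mw ∧ norm3 (wt s) ≤ Mw) →
      norm3 (z ht - zt ht) ≤ C * ε ^ 3 * ht ^ 3 ∧
      norm3 (w ht - wt ht) ≤ C * ε ^ 2 * ht ^ 2 := by
  set K0 : ℝ := 3 * LB * Mw * Mw + 6 * MD * Mw with hK0def
  have hK0nn : 0 ≤ K0 := by positivity
  refine ⟨K0 / 2 + 1, by positivity, ?_⟩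
  intro ε ht hε hht _ B E z w zt wt hB _ _ hMD' hzw hzwt hz0 hw0 hbd
  have h0mem : (0:ℝ) ∈ Icc (0:ℝ) ht := ⟨le_refl _, hht.le⟩
  set ηZ : ℝ → EuclideanSpace ℝ (Fin 3) := fun s => ιE (z s - zt s) with hηZdef
  set ηW : ℝ → EuclideanSpace ℝ (Fin 3) := fun s => ιE (w s - wt s) with hηWdef
  set Dw : ℝ → Fin 3 → ℝ := fun s =>
    cross (w s) (B (ε • z s)) + ε • E (z s) - (cross (wt s) (B (ε • z 0)) + ε • E (zt s))
    with hDwdef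
  -- derivatives
  have hηW' : ∀ s ∈ Icc (0:ℝ) ht, HasDerivAt ηW (ιE (Dw s)) s := fun s hs =>
    hasDerivAt_iota (((hzw s hs).2).sub ((hzwt s hs).2))
  have hηZ' : ∀ s ∈ Icc (0:ℝ) ht, HasDerivAt ηZ (ιE (ε • w s - ε • wt s)) s := fun s hs =>
    hasDerivAt_iota (((hzw s hs).1).sub ((hzwt s hs).1))
  have hηZ0 : ηZ 0 = 0 := by simp [hηZdef, hz0]
  have hηW0 : ηW 0 = 0 := by simp [hηWdef, hw0]
  -- crude bound on ηW
  have hWc : ∀ s ∈ Icc (0:ℝ) ht, ‖ηW s‖ ≤ 2 * Mw := by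
    intro s hs
    have : ηW s = ιE (w s) - ιE (wt s) := by simp [hηWdef]
    rw [this]
    calc ‖ιE (w s) - ιE (wt s)‖ ≤ ‖ιE (w s)‖ + ‖ιE (wt s)‖ := norm_sub_le _ _
    _ ≤ Mw + Mw := by
        rw [← norm3_eq, ← norm3_eq]; exact add_le_add (hbd s hs).1 (hbd s hs).2
    _ = 2 * Mw := by ring
  -- drift of z
  have hzdrift : ∀ s ∈ Icc (0:ℝ) ht, norm3 (z s - z 0) ≤ ε * Mw * s := by
    have := norm_image_sub_le_of_norm_deriv_right_le_segment
      (f := fun t => ιE (z t)) (f' := fun t => ιE (ε • w t)) (a := 0) (b := ht) (C := ε * Mw)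
      (fun t htt => ((hasDerivAt_iota ((hzw t htt).1)).continuousAt).continuousWithinAt)
      (fun t htt => (hasDerivAt_iota ((hzw t (Ico_subset_Icc_self htt)).1)).hasDerivWithinAt)
      (fun t htt => by
        rw [← norm3_eq]
        have : norm3 (ε • w t) = ε * norm3 (w t) := by
          rw [norm3_eq, norm3_eq, map_smul, norm_smul, Real.norm_eq_abs, abs_of_pos hε]
        rw [this]
        exact mul_le_mul_of_nonneg_left (hbd t (Ico_subset_Icc_self htt)).1 hε.le)
    intro s hs
    have h2 := this s hs
    rw [norm3_eq, map_sub]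
    simpa using h2
  -- crude bound on ηZ
  have hZc : ∀ s ∈ Icc (0:ℝ) ht, ‖ηZ s‖ ≤ ε * (2 * Mw) * s := by
    have := norm_image_sub_le_of_norm_deriv_right_le_segment
      (f := ηZ) (f' := fun t => ιE (ε • w t - ε • wt t)) (a := 0) (b := ht) (C := ε * (2 * Mw))
      (fun t htt => ((hηZ' t htt).continuousAt).continuousWithinAt)
      (fun t htt => (hηZ' t (Ico_subset_Icc_self htt)).hasDerivWithinAt)
      (fun t htt => by
        show ‖ιE (ε • w t - ε • wt t)‖ ≤ ε * (2 * Mw)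
        have he : ε • w t - ε • wt t = ε • (w t - wt t) := by rw [smul_sub]
        rw [he, map_smul, norm_smul, Real.norm_eq_abs, abs_of_pos hε]
        exact mul_le_mul_of_nonneg_left (hWc t (Ico_subset_Icc_self htt)) hε.le)
    intro s hs
    have h2 := this s hs
    rw [hηZ0, sub_zero] at h2
    simpa using h2
  -- key inner-product estimate
  have hinner : ∀ s ∈ Icc (0:ℝ) ht, ⟪ηW s, ιE (Dw s)⟫ ≤ ‖ηW s‖ * (K0 * ε ^ 2 * s) := by
    intro s hs
    have hsplit : Dw s = cross (w s - wt s) (B (ε • z s)) +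
        (cross (wt s) (B (ε • z s) - B (ε • z 0)) + ε • (E (z s) - E (zt s))) := by
      funext i; fin_cases i <;>
        simp [hDwdef, cross, Matrix.vecHead, Matrix.vecTail, Pi.sub_apply, Pi.add_apply,
          Pi.smul_apply, smul_eq_mul] <;> ring
    have horth : ⟪ηW s, ιE (cross (w s - wt s) (B (ε • z s)))⟫ = 0 := inner_cross_self _ _
    have hrest : ‖ιE (cross (wt s) (B (ε • z s) - B (ε • z 0)) + ε • (E (z s) - E (zt s)))‖
        ≤ K0 * ε ^ 2 * s := by
      have hs0 : 0 ≤ s := hs.1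
      have hBdiff : norm3 (B (ε • z s) - B (ε • z 0)) ≤ 3 * LB * (ε * (ε * Mw * s)) := by
        have hlip := hB.dist_le_mul (ε • z s) (ε • z 0)
        rw [Real.coe_toNNReal _ hLB, dist_eq_norm, dist_eq_norm] at hlip
        have h1 : ‖ε • z s - ε • z 0‖ = ε * ‖z s - z 0‖ := by
          rw [← smul_sub, norm_smul, Real.norm_eq_abs, abs_of_pos hε]
        have h2 : ‖z s - z 0‖ ≤ ε * Mw * s :=
          le_trans (pinorm_le_norm3 _) (hzdrift s hs)
        calc norm3 (B (ε • z s) - B (ε • z 0)) ≤ 3 * ‖B (ε • z s) - B (ε • z 0)‖ :=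
              norm3_le_three _
        _ ≤ 3 * (LB * ‖ε • z s - ε • z 0‖) := by linarith
        _ = 3 * LB * (ε * ‖z s - z 0‖) := by rw [h1]; ring
        _ ≤ 3 * LB * (ε * (ε * Mw * s)) := by
            apply mul_le_mul_of_nonneg_left _ (by positivity)
            exact mul_le_mul_of_nonneg_left h2 hε.le
      have hEdiff : norm3 (E (z s) - E (zt s)) ≤ 3 * MD * (ε * (2 * Mw) * s) := by
        have hlip := hMD'.dist_le_mul (z s) (zt s)
        rw [Real.coe_toNNReal _ hMD, dist_eq_norm, dist_eq_norm] at hlip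
        have h2 : ‖z s - zt s‖ ≤ ε * (2 * Mw) * s := by
          refine le_trans (pinorm_le_norm3 _) ?_
          rw [norm3_eq]
          exact hZc s hs
        calc norm3 (E (z s) - E (zt s)) ≤ 3 * ‖E (z s) - E (zt s)‖ := norm3_le_three _
        _ ≤ 3 * (MD * ‖z s - zt s‖) := by linarith
        _ ≤ 3 * MD * (ε * (2 * Mw) * s) := by
            rw [mul_assoc]
            exact mul_le_mul_of_nonneg_left
              (mul_le_mul_of_nonneg_left h2 hMD) (by norm_num)
      have hcrossb : norm3 (cross (wt s) (B (ε • z s) - B (ε • z 0)))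
          ≤ Mw * (3 * LB * (ε * (ε * Mw * s))) := by
        refine le_trans (norm3_cross_le _ _) ?_
        have h1 := (hbd s hs).2
        have h2 : 0 ≤ norm3 (B (ε • z s) - B (ε • z 0)) := Real.sqrt_nonneg _
        nlinarith [hBdiff, Real.sqrt_nonneg (∑ i, (wt s) i ^ 2)]
      calc ‖ιE (cross (wt s) (B (ε • z s) - B (ε • z 0)) + ε • (E (z s) - E (zt s)))‖
          ≤ ‖ιE (cross (wt s) (B (ε • z s) - B (ε • z 0)))‖ + ‖ιE (ε • (E (z s) - E (zt s)))‖ := by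
            rw [map_add]; exact norm_add_le _ _
      _ = norm3 (cross (wt s) (B (ε • z s) - B (ε • z 0))) + ε * norm3 (E (z s) - E (zt s)) := by
            rw [← norm3_eq, map_smul, norm_smul, Real.norm_eq_abs, abs_of_pos hε, ← norm3_eq]
      _ ≤ Mw * (3 * LB * (ε * (ε * Mw * s))) + ε * (3 * MD * (ε * (2 * Mw) * s)) := by
            refine add_le_add hcrossb (mul_le_mul_of_nonneg_left hEdiff hε.le)
      _ = K0 * ε ^ 2 * s := by rw [hK0def]; ring
    calc ⟪ηW s, ιE (Dw s)⟫
        = ⟪ηW s, ιE (cross (w s - wt s) (B (ε • z s)))⟫ +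
          ⟪ηW s, ιE (cross (wt s) (B (ε • z s) - B (ε • z 0)) + ε • (E (z s) - E (zt s)))⟫ := by
          rw [hsplit, map_add, inner_add_right]
    _ = ⟪ηW s, ιE (cross (wt s) (B (ε • z s) - B (ε • z 0)) + ε • (E (z s) - E (zt s)))⟫ := by
          rw [horth, zero_add]
    _ ≤ ‖ηW s‖ * ‖ιE (cross (wt s) (B (ε • z s) - B (ε • z 0)) + ε • (E (z s) - E (zt s)))‖ :=
          real_inner_le_norm _ _
    _ ≤ ‖ηW s‖ * (K0 * ε ^ 2 * s) := mul_le_mul_of_nonneg_left hrest (norm_nonneg _)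
  -- energy function
  set u : ℝ → ℝ := fun s => ⟪ηW s, ηW s⟫ with hudef
  have hu : ∀ s ∈ Icc (0:ℝ) ht, HasDerivAt u (2 * ⟪ηW s, ιE (Dw s)⟫) s := by
    intro s hs
    have h := (hηW' s hs).inner ℝ (hηW' s hs)
    refine h.congr_deriv ?_
    rw [real_inner_comm (ηW s) (ιE (Dw s))]
    ring
  -- fencing with δ
  have hWfine : ∀ s ∈ Icc (0:ℝ) ht, ‖ηW s‖ ≤ K0 / 2 * ε ^ 2 * s ^ 2 := by
    have key : ∀ δ > (0:ℝ), ∀ s ∈ Icc (0:ℝ) ht,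
        u s ≤ (K0 * ε ^ 2 / 2 * s ^ 2 + (δ + δ * s)) ^ 2 := by
      intro δ hδ
      set ψ : ℝ → ℝ := fun x => K0 * ε ^ 2 / 2 * x ^ 2 + (δ + δ * x) with hψdef
      set ψ' : ℝ → ℝ := fun x => K0 * ε ^ 2 * x + δ with hψ'def
      have hψd : ∀ x, HasDerivAt ψ (ψ' x) x := by
        intro x
        have h1 : HasDerivAt (fun y : ℝ => y ^ 2) (2 * x) x := by
          simpa using hasDerivAt_pow 2 x
        have h2 := (h1.const_mul (K0 * ε ^ 2 / 2)).add
          (((hasDerivAt_id x).const_mul δ).const_add δ)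
        refine h2.congr_deriv ?_
        simp [hψ'def]; ring
      have hψpos : ∀ x, 0 ≤ x → 0 < ψ x := by
        intro x hx
        have t1 : 0 ≤ K0 * ε ^ 2 / 2 * x ^ 2 :=
          mul_nonneg (div_nonneg (mul_nonneg hK0nn (sq_nonneg ε)) (by norm_num)) (sq_nonneg x)
        have t2 : 0 ≤ δ * x := mul_nonneg hδ.le hx
        simp only [hψdef]; linarith
      have := image_le_of_deriv_right_lt_deriv_boundary
        (f := u) (f' := fun x => 2 * ⟪ηW x, ιE (Dw x)⟫) (a := 0) (b := ht)
        (B := fun x => (ψ x) ^ 2) (B' := fun x => 2 * ψ x * ψ' x)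
        (fun s hs => ((hu s hs).continuousAt).continuousWithinAt)
        (fun x hx => (hu x (Ico_subset_Icc_self hx)).hasDerivWithinAt)
        (by
          simp only [hudef, hηW0, inner_zero_left]
          positivity)
        (fun x => by
          have := (hψd x).pow 2
          refine this.congr_deriv ?_
          push_cast
          ring)
        (fun x hx hcontact => by
          have hx0 : 0 ≤ x := hx.1
          have hxm : x ∈ Icc (0:ℝ) ht := Ico_subset_Icc_self hx
          have hψp := hψpos x hx0
          have hnorm : ‖ηW x‖ = ψ x := by
            have h1 : u x = ‖ηW x‖ ^ 2 := real_inner_self_eq_norm_sq _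
            rw [h1] at hcontact
            rw [← Real.sqrt_sq (norm_nonneg (ηW x)), hcontact, Real.sqrt_sq hψp.le]
          have hb := hinner x hxm
          rw [hnorm] at hb
          have hK0x : K0 * ε ^ 2 * x ≥ 0 := by positivity
          calc 2 * ⟪ηW x, ιE (Dw x)⟫ ≤ 2 * (ψ x * (K0 * ε ^ 2 * x)) := by linarith
          _ < 2 * ψ x * ψ' x := by
              simp only [hψ'def]
              nlinarith [hψp, hδ])
      intro s hs
      exact this hs
    intro s hs
    have hsnn : 0 ≤ s := hs.1
    have husq : u s = ‖ηW s‖ ^ 2 := real_inner_self_eq_norm_sq _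
    by_contra hcon
    push_neg at hcon
    have h1s : 0 < 1 + s := by linarith
    set δ := (‖ηW s‖ - K0 / 2 * ε ^ 2 * s ^ 2) / (2 * (1 + s)) with hδdef
    have hδpos : 0 < δ := div_pos (by linarith) (by linarith)
    have hk := key δ hδpos s hs
    rw [husq] at hk
    have hδs : δ + δ * s = (‖ηW s‖ - K0 / 2 * ε ^ 2 * s ^ 2) / 2 := by
      rw [hδdef]; field_simp
    have hψnn : 0 ≤ K0 * ε ^ 2 / 2 * s ^ 2 + (δ + δ * s) := by
      have : 0 ≤ δ * s := mul_nonneg hδpos.le hsnn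
      have t1 : 0 ≤ K0 * ε ^ 2 / 2 * s ^ 2 :=
        mul_nonneg (div_nonneg (mul_nonneg hK0nn (sq_nonneg ε)) (by norm_num)) (sq_nonneg s)
      linarith
    have hle : ‖ηW s‖ ≤ K0 * ε ^ 2 / 2 * s ^ 2 + (δ + δ * s) := by
      nlinarith [norm_nonneg (ηW s)]
    rw [hδs] at hle
    have : K0 * ε ^ 2 / 2 * s ^ 2 = K0 / 2 * ε ^ 2 * s ^ 2 := by ring
    linarith [this ▸ hle]
  -- final ηZ bound
  have hZfine : ‖ηZ ht‖ ≤ K0 / 6 * ε ^ 3 * ht ^ 3 := by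
    have := image_norm_le_of_norm_deriv_right_le_deriv_boundary
      (f := ηZ) (f' := fun t => ιE (ε • w t - ε • wt t)) (a := 0) (b := ht)
      (B := fun x => K0 / 6 * ε ^ 3 * x ^ 3) (B' := fun x => K0 / 2 * ε ^ 3 * x ^ 2)
      (fun s hs => ((hηZ' s hs).continuousAt).continuousWithinAt)
      (fun x hx => (hηZ' x (Ico_subset_Icc_self hx)).hasDerivWithinAt)
      (by rw [hηZ0]; simp)
      (fun x => by
        have h1 : HasDerivAt (fun y : ℝ => y ^ 3) (3 * x ^ 2) x := by
          simpa using hasDerivAt_pow 3 x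
        have := h1.const_mul (K0 / 6 * ε ^ 3)
        refine this.congr_deriv ?_
        ring)
      (fun x hx => by
        have hxm : x ∈ Icc (0:ℝ) ht := Ico_subset_Icc_self hx
        show ‖ιE (ε • w x - ε • wt x)‖ ≤ K0 / 2 * ε ^ 3 * x ^ 2
        have he : ε • w x - ε • wt x = ε • (w x - wt x) := by rw [smul_sub]
        rw [he, map_smul, norm_smul, Real.norm_eq_abs, abs_of_pos hε]
        calc ε * ‖ηW x‖ ≤ ε * (K0 / 2 * ε ^ 2 * x ^ 2) :=
              mul_le_mul_of_nonneg_left (hWfine x hxm) hε.le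
        _ = K0 / 2 * ε ^ 3 * x ^ 2 := by ring)
    have h2 := this (right_mem_Icc.2 hht.le)
    simpa using h2
  constructor
  · have h1 : norm3 (z ht - zt ht) = ‖ηZ ht‖ := norm3_eq _
    have h2 : K0 / 6 * ε ^ 3 * ht ^ 3 ≤ (K0 / 2 + 1) * ε ^ 3 * ht ^ 3 := by
      have : 0 ≤ ε ^ 3 * ht ^ 3 := by positivity
      nlinarith
    linarith [h1 ▸ hZfine]
  · have h1 : norm3 (w ht - wt ht) = ‖ηW ht‖ := norm3_eq _
    have hWf := hWfine ht (right_mem_Icc.2 hht.le)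
    have h2 : K0 / 2 * ε ^ 2 * ht ^ 2 ≤ (K0 / 2 + 1) * ε ^ 2 * ht ^ 2 := by
      have : 0 ≤ ε ^ 2 * ht ^ 2 := by positivity
      nlinarith
    linarith [h1 ▸ hWf]
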